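/- Let a', b, β, C_p, C_q > 0, let 2 < p < 10/3 and 14/3 < q < 6, and let 0 < α < α_V where α_V = (b/(12(q−p)))³ ( q(14−3p)/C_q )^{(14−3p)/(q−p)} ( p(3q−14)/(β C_p) )^{(3q−14)/(q−p)}. Define h(t) = (a'/2) t² + (b/4) t⁴ − (β C_p/p) α^{(6−p)/4} t^{3(p−2)/2} − (C_q/q) α^{(6−q)/4} t^{3(q−2)/2} for t > 0. Then h attains a global maximum at positive level, and there exist three positive constants R₁ < T_α < R₂ such that h(R₁) = h(R₂) = 0, h(t) > 0 for all t ∈ (R₁, R₂), and h(T_α) = max_{t>0} h(t) > 0. -/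

import Mathlib

open Real Filter Set Topology

lemma key_identity (b β Cp Cq p q : ℝ) (hb : 0 < b) (hβ : 0 < β)
    (hCp : 0 < Cp) (hCq : 0 < Cq)
    (hp : 2 < p) (hp' : p < 10 / 3) (hq : 14 / 3 < q) (hq' : q < 6) :
    ((b / (12 * (q - p))) ^ (3 : ℕ)
        * (q * (14 - 3 * p) / Cq) ^ ((14 - 3 * p) / (q - p))
        * (p * (3 * q - 14) / (β * Cp)) ^ ((3 * q - 14) / (q - p))) ^ ((1:ℝ)/3)
      * ((((14 - 3*p)/2) + ((3*q - 14)/2)) / ((3*q - 14)/2)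
        * ((β * Cp / p) *
          ((((14 - 3*p)/2) * (β * Cp / p) / (((3*q - 14)/2) * (Cq / q)))
              ^ (1 / (((14 - 3*p)/2) + ((3*q - 14)/2))))
            ^ (-((14 - 3*p)/2)))) = b / 4 := by
  have hp0 : 0 < p := by linarith
  have hq0 : 0 < q := by linarith
  have hD : 0 < q - p := by linarith
  have hL3p : 0 < 14 - 3 * p := by linarith
  have hL3q : 0 < 3 * q - 14 := by linarith
  set D := q - p with hDdef
  set m := (14 - 3*p)/2 with hmdef
  set v := (3*q - 14)/2 with hvdef
  have hm : 0 < m := by rw [hmdef]; positivity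
  have hv : 0 < v := by rw [hvdef]; positivity
  have hmv : m + v = 3 * D / 2 := by rw [hmdef, hvdef, hDdef]; ring
  have hmv0 : 0 < m + v := by rw [hmv]; positivity
  set C₁ := β * Cp / p with hC₁def
  have hC₁ : 0 < C₁ := by rw [hC₁def]; positivity
  set C₂ := Cq / q with hC₂def
  have hC₂ : 0 < C₂ := by rw [hC₂def]; positivity
  set X := m * C₁ / (v * C₂) with hXdef
  have hX : 0 < X := by rw [hXdef]; positivity
  set c := X ^ (1 / (m + v)) with hcdef
  have hc : 0 < c := rpow_pos_of_pos hX _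
  set αV := (b / (12 * D)) ^ (3 : ℕ)
        * (q * (14 - 3 * p) / Cq) ^ ((14 - 3 * p) / D)
        * (p * (3 * q - 14) / (β * Cp)) ^ ((3 * q - 14) / D) with hαVdef
  have hαV : 0 < αV := by rw [hαVdef]; positivity
  have h12 : Real.log 12 = Real.log 3 + Real.log 4 := by
    rw [← Real.log_mul (by norm_num) (by norm_num)]; norm_num
  -- elementary log expansions
  have lm : Real.log m = Real.log (14 - 3*p) - Real.log 2 := by
    rw [hmdef]; exact Real.log_div (ne_of_gt hL3p) two_ne_zero
  have lv : Real.log v = Real.log (3*q - 14) - Real.log 2 := by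
    rw [hvdef]; exact Real.log_div (ne_of_gt hL3q) two_ne_zero
  have lC₁ : Real.log C₁ = Real.log β + Real.log Cp - Real.log p := by
    rw [hC₁def, Real.log_div (by positivity) (ne_of_gt hp0),
      Real.log_mul (ne_of_gt hβ) (ne_of_gt hCp)]
  have lC₂ : Real.log C₂ = Real.log Cq - Real.log q := by
    rw [hC₂def]; exact Real.log_div (ne_of_gt hCq) (ne_of_gt hq0)
  have lmv : Real.log (m + v) = Real.log 3 + Real.log D - Real.log 2 := by
    rw [hmv, Real.log_div (by positivity) two_ne_zero,
      Real.log_mul (by norm_num) (ne_of_gt hD)]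
  have lX : Real.log X = (Real.log m + Real.log C₁) - (Real.log v + Real.log C₂) := by
    rw [hXdef, Real.log_div (by positivity) (by positivity),
      Real.log_mul (ne_of_gt hm) (ne_of_gt hC₁),
      Real.log_mul (ne_of_gt hv) (ne_of_gt hC₂)]
  have lc : Real.log c = (1/(m+v)) * Real.log X := by
    rw [hcdef, Real.log_rpow hX]
  have l1 : Real.log αV = 3 * (Real.log b - (Real.log 3 + Real.log 4) - Real.log D)
      + ((14 - 3*p)/D) * (Real.log q + Real.log (14 - 3*p) - Real.log Cq)
      + ((3*q - 14)/D) * (Real.log p + Real.log (3*q - 14) - Real.log β - Real.log Cp) := by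
    rw [hαVdef, Real.log_mul (by positivity) (by positivity),
      Real.log_mul (by positivity) (by positivity), Real.log_pow,
      Real.log_rpow (by positivity), Real.log_rpow (by positivity),
      Real.log_div (by positivity) (ne_of_gt hCq),
      Real.log_div (by positivity) (by positivity),
      Real.log_div (by positivity) (by positivity),
      Real.log_mul (ne_of_gt hq0) (ne_of_gt hL3p),
      Real.log_mul (ne_of_gt hp0) (ne_of_gt hL3q),
      Real.log_mul (by norm_num) (ne_of_gt hD),
      Real.log_mul (ne_of_gt hβ) (ne_of_gt hCp), h12]
    push_cast
    ring
  have hL : (0:ℝ) < αV ^ ((1:ℝ)/3) * ((m + v) / v * (C₁ * c ^ (-m))) := by positivity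
  have hR : (0:ℝ) < b / 4 := by positivity
  have hlog : Real.log (αV ^ ((1:ℝ)/3) * ((m + v) / v * (C₁ * c ^ (-m))))
      = Real.log (b / 4) := by
    rw [Real.log_mul (by positivity) (by positivity),
      Real.log_mul (by positivity) (by positivity),
      Real.log_mul (ne_of_gt hC₁) (by positivity),
      Real.log_rpow hαV, Real.log_rpow hc,
      Real.log_div (ne_of_gt hmv0) (ne_of_gt hv),
      Real.log_div (ne_of_gt hb) (by norm_num : (4:ℝ) ≠ 0),
      l1, lc, lX, lm, lv, lC₁, lC₂, lmv, hmdef, hmv]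
    field_simp
    ring
  exact Real.log_injOn_pos (Set.mem_Ioi.2 hL) (Set.mem_Ioi.2 hR) hlog

set_option maxHeartbeats 2000000 in
/-- Lemma 3.1: for `0 < α < α_V` the function
`h(t) = (a'/2)t² + (b/4)t⁴ - (βC_p/p)α^{(6-p)/4} t^{3(p-2)/2} - (C_q/q)α^{(6-q)/4} t^{3(q-2)/2}`
has a global maximum at positive level, and there are `0 < R₁ < T_α < R₂` with
`h(R₁) = h(R₂) = 0`, `h > 0` on `(R₁, R₂)`, and `h(T_α) = max_{t>0} h(t) > 0`. -/
theorem stmt_4 (a' b β Cp Cq α p q : ℝ) (ha' : 0 < a') (hb : 0 < b) (hβ : 0 < β)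
    (hCp : 0 < Cp) (hCq : 0 < Cq)
    (hp : 2 < p) (hp' : p < 10 / 3) (hq : 14 / 3 < q) (hq' : q < 6)
    (αV : ℝ)
    (hαV : αV = (b / (12 * (q - p))) ^ (3 : ℕ)
        * (q * (14 - 3 * p) / Cq) ^ ((14 - 3 * p) / (q - p))
        * (p * (3 * q - 14) / (β * Cp)) ^ ((3 * q - 14) / (q - p)))
    (hα : 0 < α) (hαlt : α < αV)
    (h : ℝ → ℝ)
    (hh : h = fun t => a' / 2 * t ^ (2 : ℕ) + b / 4 * t ^ (4 : ℕ)
        - β * Cp / p * α ^ ((6 - p) / 4) * t ^ (3 * (p - 2) / 2)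
        - Cq / q * α ^ ((6 - q) / 4) * t ^ (3 * (q - 2) / 2)) :
    ∃ R₁ Tα R₂ : ℝ, 0 < R₁ ∧ R₁ < Tα ∧ Tα < R₂ ∧
      h R₁ = 0 ∧ h R₂ = 0 ∧
      (∀ t : ℝ, R₁ < t → t < R₂ → 0 < h t) ∧
      (∀ t : ℝ, 0 < t → h t ≤ h Tα) ∧
      0 < h Tα := by
  have hp0 : 0 < p := by linarith
  have hq0 : 0 < q := by linarith
  have hL3p : 0 < 14 - 3 * p := by linarith
  have hL3q : 0 < 3 * q - 14 := by linarith
  have hkey0 := key_identity b β Cp Cq p q hb hβ hCp hCq hp hp' hq hq'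
  rw [← hαV] at hkey0
  set m := (14 - 3*p)/2 with hmdef
  set v := (3*q - 14)/2 with hvdef
  have hm : 0 < m := by rw [hmdef]; positivity
  have hv : 0 < v := by rw [hvdef]; positivity
  have hmv0 : 0 < m + v := by positivity
  set C₁ := β * Cp / p with hC₁def
  have hC₁ : 0 < C₁ := by rw [hC₁def]; positivity
  set C₂ := Cq / q with hC₂def
  have hC₂ : 0 < C₂ := by rw [hC₂def]; positivity
  set X := m * C₁ / (v * C₂) with hXdef
  have hX : 0 < X := by rw [hXdef]; positivity
  set c := X ^ (1 / (m + v)) with hcdef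
  have hc : 0 < c := by rw [hcdef]; exact rpow_pos_of_pos hX _
  -- hkey0 : αV ^ (1/3) * ((m+v)/v * (C₁ * c ^ (-m))) = b / 4
  have hαV0 : 0 < αV := by
    rw [hαV]
    have h1 : (0:ℝ) < b / (12 * (q - p)) := div_pos hb (by nlinarith)
    have h2 : (0:ℝ) < q * (14 - 3 * p) / Cq := div_pos (by nlinarith) hCq
    have h3 : (0:ℝ) < p * (3 * q - 14) / (β * Cp) :=
      div_pos (by nlinarith) (mul_pos hβ hCp)
    exact mul_pos (mul_pos (pow_pos h1 3) (rpow_pos_of_pos h2 _))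
      (rpow_pos_of_pos h3 _)
  have hG : 0 < (m + v)/v * (C₁ * c ^ (-m)) := by
    have := rpow_pos_of_pos hc (-m)
    positivity
  have hαG : α ^ ((1:ℝ)/3) * ((m + v)/v * (C₁ * c ^ (-m))) < b / 4 := by
    calc α ^ ((1:ℝ)/3) * ((m + v)/v * (C₁ * c ^ (-m)))
        < αV ^ ((1:ℝ)/3) * ((m + v)/v * (C₁ * c ^ (-m))) :=
          mul_lt_mul_of_pos_right
            (Real.rpow_lt_rpow hα.le hαlt (by norm_num)) hG
      _ = b / 4 := hkey0
  -- the candidate point t₀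
  set t₀ := c * α ^ ((1:ℝ)/6) with ht₀def
  have ht₀ : 0 < t₀ := by
    rw [ht₀def]; exact mul_pos hc (rpow_pos_of_pos hα _)
  have lt₀ : Real.log t₀ = Real.log c + 1/6 * Real.log α := by
    rw [ht₀def, Real.log_mul (ne_of_gt hc) (ne_of_gt (rpow_pos_of_pos hα _)),
      Real.log_rpow hα]
  have hAs : C₁ * α ^ ((6 - p)/4) * t₀ ^ (3 * (p - 2) / 2)
      = α ^ ((1:ℝ)/3) * (C₁ * c ^ (-m)) * t₀ ^ (4:ℕ) := by
    have hL : 0 < C₁ * α ^ ((6 - p)/4) * t₀ ^ (3 * (p - 2) / 2) :=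
      mul_pos (mul_pos hC₁ (rpow_pos_of_pos hα _)) (rpow_pos_of_pos ht₀ _)
    have hR : 0 < α ^ ((1:ℝ)/3) * (C₁ * c ^ (-m)) * t₀ ^ (4:ℕ) :=
      mul_pos (mul_pos (rpow_pos_of_pos hα _)
        (mul_pos hC₁ (rpow_pos_of_pos hc _))) (pow_pos ht₀ 4)
    refine Real.log_injOn_pos (Set.mem_Ioi.2 hL) (Set.mem_Ioi.2 hR) ?_
    rw [Real.log_mul (ne_of_gt (mul_pos hC₁ (rpow_pos_of_pos hα _)))
        (ne_of_gt (rpow_pos_of_pos ht₀ _)),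
      Real.log_mul (ne_of_gt hC₁) (ne_of_gt (rpow_pos_of_pos hα _)),
      Real.log_mul (ne_of_gt (mul_pos (rpow_pos_of_pos hα _)
        (mul_pos hC₁ (rpow_pos_of_pos hc _)))) (ne_of_gt (pow_pos ht₀ 4)),
      Real.log_mul (ne_of_gt (rpow_pos_of_pos hα _))
        (ne_of_gt (mul_pos hC₁ (rpow_pos_of_pos hc _))),
      Real.log_mul (ne_of_gt hC₁) (ne_of_gt (rpow_pos_of_pos hc _)),
      Real.log_rpow hα, Real.log_rpow hα, Real.log_rpow ht₀, Real.log_rpow hc,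
      Real.log_pow, lt₀, hmdef]
    push_cast
    ring
  have hBr : C₂ * α ^ ((6 - q)/4) * t₀ ^ (3 * (q - 2) / 2)
      = α ^ ((1:ℝ)/3) * (C₂ * c ^ v) * t₀ ^ (4:ℕ) := by
    have hL : 0 < C₂ * α ^ ((6 - q)/4) * t₀ ^ (3 * (q - 2) / 2) :=
      mul_pos (mul_pos hC₂ (rpow_pos_of_pos hα _)) (rpow_pos_of_pos ht₀ _)
    have hR : 0 < α ^ ((1:ℝ)/3) * (C₂ * c ^ v) * t₀ ^ (4:ℕ) :=
      mul_pos (mul_pos (rpow_pos_of_pos hα _)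
        (mul_pos hC₂ (rpow_pos_of_pos hc _))) (pow_pos ht₀ 4)
    refine Real.log_injOn_pos (Set.mem_Ioi.2 hL) (Set.mem_Ioi.2 hR) ?_
    rw [Real.log_mul (ne_of_gt (mul_pos hC₂ (rpow_pos_of_pos hα _)))
        (ne_of_gt (rpow_pos_of_pos ht₀ _)),
      Real.log_mul (ne_of_gt hC₂) (ne_of_gt (rpow_pos_of_pos hα _)),
      Real.log_mul (ne_of_gt (mul_pos (rpow_pos_of_pos hα _)
        (mul_pos hC₂ (rpow_pos_of_pos hc _)))) (ne_of_gt (pow_pos ht₀ 4)),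
      Real.log_mul (ne_of_gt (rpow_pos_of_pos hα _))
        (ne_of_gt (mul_pos hC₂ (rpow_pos_of_pos hc _))),
      Real.log_mul (ne_of_gt hC₂) (ne_of_gt (rpow_pos_of_pos hc _)),
      Real.log_rpow hα, Real.log_rpow hα, Real.log_rpow ht₀, Real.log_rpow hc,
      Real.log_pow, lt₀, hvdef]
    push_cast
    ring
  have hcmv : c ^ (m + v) = X := by
    rw [hcdef, ← Real.rpow_mul hX.le, one_div_mul_cancel (ne_of_gt hmv0),
      Real.rpow_one]
  have hcv : c ^ v = X * c ^ (-m) := by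
    rw [← hcmv, ← Real.rpow_add hc]
    congr 1
    ring
  have hsum : C₁ * c ^ (-m) + C₂ * c ^ v = (m + v)/v * (C₁ * c ^ (-m)) := by
    rw [hcv, hXdef]
    field_simp
    ring
  have hABlt : C₁ * α ^ ((6 - p)/4) * t₀ ^ (3 * (p - 2) / 2)
      + C₂ * α ^ ((6 - q)/4) * t₀ ^ (3 * (q - 2) / 2) < b / 4 * t₀ ^ (4:ℕ) := by
    rw [hAs, hBr]
    calc α ^ ((1:ℝ)/3) * (C₁ * c ^ (-m)) * t₀ ^ (4:ℕ)
          + α ^ ((1:ℝ)/3) * (C₂ * c ^ v) * t₀ ^ (4:ℕ)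
        = α ^ ((1:ℝ)/3) * (C₁ * c ^ (-m) + C₂ * c ^ v) * t₀ ^ (4:ℕ) := by ring
      _ = α ^ ((1:ℝ)/3) * ((m + v)/v * (C₁ * c ^ (-m))) * t₀ ^ (4:ℕ) := by
          rw [hsum]
      _ < b / 4 * t₀ ^ (4:ℕ) :=
          mul_lt_mul_of_pos_right hαG (pow_pos ht₀ 4)
  have hht₀ : 0 < h t₀ := by
    simp only [hh]
    have h1 : 0 < a' / 2 * t₀ ^ (2:ℕ) :=
      mul_pos (by positivity) (pow_pos ht₀ 2)
    linarith [hABlt]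
  -- h is negative for small t
  have hA : 0 < C₁ * α ^ ((6 - p)/4) := mul_pos hC₁ (rpow_pos_of_pos hα _)
  have hB : 0 < C₂ * α ^ ((6 - q)/4) := mul_pos hC₂ (rpow_pos_of_pos hα _)
  have hsmall : ∃ t₁ : ℝ, 0 < t₁ ∧ ∀ t : ℝ, 0 < t → t ≤ t₁ → h t < 0 := by
    have hs2 : 0 < 2 - 3*(p-2)/2 := by linarith
    have hs4 : 0 < 4 - 3*(p-2)/2 := by linarith
    have k1 : Tendsto (fun t : ℝ => t ^ (2 - 3*(p-2)/2)) (𝓝 (0:ℝ)) (𝓝 0) := by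
      have := (Real.continuousAt_rpow_const 0 (2 - 3*(p-2)/2) (Or.inr hs2.le)).tendsto
      simpa [Real.zero_rpow (ne_of_gt hs2)] using this
    have k2 : Tendsto (fun t : ℝ => t ^ (4 - 3*(p-2)/2)) (𝓝 (0:ℝ)) (𝓝 0) := by
      have := (Real.continuousAt_rpow_const 0 (4 - 3*(p-2)/2) (Or.inr hs4.le)).tendsto
      simpa [Real.zero_rpow (ne_of_gt hs4)] using this
    have tend : Tendsto (fun t : ℝ => a'/2 * t ^ (2 - 3*(p-2)/2)
        + b/4 * t ^ (4 - 3*(p-2)/2)) (𝓝[>] (0:ℝ)) (𝓝 0) := by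
      have := ((k1.const_mul (a'/2)).add (k2.const_mul (b/4))).mono_left
        (nhdsWithin_le_nhds (s := Set.Ioi (0:ℝ)))
      simpa using this
    have hev : ∀ᶠ t in 𝓝[>] (0:ℝ), a'/2 * t ^ (2 - 3*(p-2)/2)
        + b/4 * t ^ (4 - 3*(p-2)/2) < C₁ * α ^ ((6 - p)/4) :=
      tend.eventually_lt_const hA
    rcases mem_nhdsGT_iff_exists_Ioc_subset.mp hev with ⟨u, hu, hsub⟩
    refine ⟨u, hu, fun t ht htu => ?_⟩
    have hφ : a'/2 * t ^ (2 - 3*(p-2)/2) + b/4 * t ^ (4 - 3*(p-2)/2)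
        < C₁ * α ^ ((6 - p)/4) := hsub ⟨ht, htu⟩
    have e2 : t ^ (2:ℕ) = t ^ (3*(p-2)/2) * t ^ (2 - 3*(p-2)/2) := by
      rw [← Real.rpow_natCast t 2, ← Real.rpow_add ht]
      norm_num
    have e4 : t ^ (4:ℕ) = t ^ (3*(p-2)/2) * t ^ (4 - 3*(p-2)/2) := by
      rw [← Real.rpow_natCast t 4, ← Real.rpow_add ht]
      norm_num
    simp only [hh]
    rw [e2, e4]
    have F1 := mul_lt_mul_of_pos_left hφ (rpow_pos_of_pos ht (3*(p-2)/2))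
    have F2 := mul_pos hB (rpow_pos_of_pos ht (3*(q-2)/2))
    ring_nf at F1 F2 ⊢
    linarith [F1, F2]
  -- h is negative for large t
  have hlarge : ∃ t₂ : ℝ, 0 < t₂ ∧ ∀ t : ℝ, t₂ ≤ t → h t < 0 := by
    have hr2 : 0 < 3*(q-2)/2 - 2 := by linarith
    have hr4 : 0 < 3*(q-2)/2 - 4 := by linarith
    have k1 : Tendsto (fun t : ℝ => t ^ (2 - 3*(q-2)/2)) atTop (𝓝 0) := by
      have := tendsto_rpow_neg_atTop hr2
      rwa [show -(3*(q-2)/2 - 2) = 2 - 3*(q-2)/2 by ring] at this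
    have k2 : Tendsto (fun t : ℝ => t ^ (4 - 3*(q-2)/2)) atTop (𝓝 0) := by
      have := tendsto_rpow_neg_atTop hr4
      rwa [show -(3*(q-2)/2 - 4) = 4 - 3*(q-2)/2 by ring] at this
    have tend : Tendsto (fun t : ℝ => a'/2 * t ^ (2 - 3*(q-2)/2)
        + b/4 * t ^ (4 - 3*(q-2)/2)) atTop (𝓝 0) := by
      have := (k1.const_mul (a'/2)).add (k2.const_mul (b/4))
      simpa using this
    have hev : ∀ᶠ t in atTop, a'/2 * t ^ (2 - 3*(q-2)/2)
        + b/4 * t ^ (4 - 3*(q-2)/2) < C₂ * α ^ ((6 - q)/4) :=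
      tend.eventually_lt_const hB
    rcases eventually_atTop.mp hev with ⟨N, hN⟩
    refine ⟨max N 1, lt_of_lt_of_le one_pos (le_max_right _ _), fun t htt => ?_⟩
    have ht : (0:ℝ) < t := lt_of_lt_of_le one_pos ((le_max_right N 1).trans htt)
    have hφ : a'/2 * t ^ (2 - 3*(q-2)/2) + b/4 * t ^ (4 - 3*(q-2)/2)
        < C₂ * α ^ ((6 - q)/4) := hN t ((le_max_left N 1).trans htt)
    have e2 : t ^ (2:ℕ) = t ^ (3*(q-2)/2) * t ^ (2 - 3*(q-2)/2) := by
      rw [← Real.rpow_natCast t 2, ← Real.rpow_add ht]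
      norm_num
    have e4 : t ^ (4:ℕ) = t ^ (3*(q-2)/2) * t ^ (4 - 3*(q-2)/2) := by
      rw [← Real.rpow_natCast t 4, ← Real.rpow_add ht]
      norm_num
    simp only [hh]
    rw [e2, e4]
    have F1 := mul_lt_mul_of_pos_left hφ (rpow_pos_of_pos ht (3*(q-2)/2))
    have F2 := mul_pos hA (rpow_pos_of_pos ht (3*(p-2)/2))
    ring_nf at F1 F2 ⊢
    linarith [F1, F2]
  obtain ⟨t₁, ht₁0, ht₁⟩ := hsmall
  obtain ⟨t₂, ht₂0, ht₂⟩ := hlarge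
  have ht₁t₀ : t₁ < t₀ := by
    by_contra hcon
    push_neg at hcon
    linarith [ht₁ t₀ ht₀ hcon]
  have ht₀t₂ : t₀ < t₂ := by
    by_contra hcon
    push_neg at hcon
    linarith [ht₂ t₀ hcon]
  -- continuity of h on positive reals
  have hcont : ∀ x : ℝ, 0 < x → ContinuousAt h x := by
    intro x hx
    rw [hh]
    have c1 : ContinuousAt (fun t : ℝ => t ^ (3*(p-2)/2)) x :=
      Real.continuousAt_rpow_const x _ (Or.inl hx.ne')
    have c2 : ContinuousAt (fun t : ℝ => t ^ (3*(q-2)/2)) x :=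
      Real.continuousAt_rpow_const x _ (Or.inl hx.ne')
    exact (((continuousAt_const.mul (continuousAt_id.pow 2)).add
      (continuousAt_const.mul (continuousAt_id.pow 4))).sub
      (continuousAt_const.mul c1)).sub (continuousAt_const.mul c2)
  -- maximum on [t₁, t₂]
  have hcontOn : ContinuousOn h (Set.Icc t₁ t₂) := fun x hx =>
    (hcont x (lt_of_lt_of_le ht₁0 hx.1)).continuousWithinAt
  obtain ⟨Tα, hTmem, hTmax⟩ := isCompact_Icc.exists_isMaxOn
    ⟨t₀, ht₁t₀.le, ht₀t₂.le⟩ hcontOn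
  have hTmax' : ∀ y ∈ Set.Icc t₁ t₂, h y ≤ h Tα := isMaxOn_iff.mp hTmax
  have hT0 : 0 < Tα := lt_of_lt_of_le ht₁0 hTmem.1
  have hhT : 0 < h Tα := lt_of_lt_of_le hht₀ (hTmax' t₀ ⟨ht₁t₀.le, ht₀t₂.le⟩)
  have hglobal : ∀ t : ℝ, 0 < t → h t ≤ h Tα := by
    intro t ht
    rcases le_or_gt t₁ t with h1 | h1
    · rcases le_or_gt t t₂ with h2 | h2
      · exact hTmax' t ⟨h1, h2⟩
      · linarith [ht₂ t h2.le]
    · linarith [ht₁ t ht h1.le]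
  -- construction of R₁
  have hcontOn₁ : ContinuousOn h (Set.Icc t₁ Tα) := fun x hx =>
    (hcont x (lt_of_lt_of_le ht₁0 hx.1)).continuousWithinAt
  set K₁ := Set.Icc t₁ Tα ∩ h ⁻¹' Set.Iic 0 with hK₁def
  have hK₁closed : IsClosed K₁ :=
    hcontOn₁.preimage_isClosed_of_isClosed isClosed_Icc isClosed_Iic
  have hK₁ne : K₁.Nonempty := ⟨t₁, ⟨le_refl t₁, hTmem.1⟩, (ht₁ t₁ ht₁0 le_rfl).le⟩
  have hK₁bdd : BddAbove K₁ := ⟨Tα, fun x hx => hx.1.2⟩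
  set R₁ := sSup K₁ with hR₁def
  have hR₁mem : R₁ ∈ K₁ := hK₁closed.csSup_mem hK₁ne hK₁bdd
  have hR₁t₁ : t₁ ≤ R₁ := hR₁mem.1.1
  have hR₁pos : 0 < R₁ := lt_of_lt_of_le ht₁0 hR₁t₁
  have hR₁le : h R₁ ≤ 0 := hR₁mem.2
  have hR₁T : R₁ < Tα := lt_of_le_of_ne hR₁mem.1.2 (by
    intro e
    rw [e] at hR₁le
    linarith)
  have hpos₁ : ∀ t : ℝ, R₁ < t → t ≤ Tα → 0 < h t := by
    intro t h1 h2
    by_contra hcon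
    push_neg at hcon
    have : t ∈ K₁ := ⟨⟨hR₁t₁.trans h1.le, h2⟩, hcon⟩
    exact absurd (le_csSup hK₁bdd this) (not_le.2 h1)
  have hhR₁ : h R₁ = 0 := by
    refine le_antisymm hR₁le ?_
    have tendR : Tendsto h (𝓝[>] R₁) (𝓝 (h R₁)) :=
      (hcont R₁ hR₁pos).continuousWithinAt
    refine ge_of_tendsto tendR ?_
    filter_upwards [Ioc_mem_nhdsGT hR₁T] with t ht
    exact (hpos₁ t ht.1 ht.2).le
  -- construction of R₂
  have hcontOn₂ : ContinuousOn h (Set.Icc Tα t₂) := fun x hx =>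
    (hcont x (lt_of_lt_of_le hT0 hx.1)).continuousWithinAt
  set K₂ := Set.Icc Tα t₂ ∩ h ⁻¹' Set.Iic 0 with hK₂def
  have hK₂closed : IsClosed K₂ :=
    hcontOn₂.preimage_isClosed_of_isClosed isClosed_Icc isClosed_Iic
  have hK₂ne : K₂.Nonempty := ⟨t₂, ⟨hTmem.2, le_refl t₂⟩, (ht₂ t₂ le_rfl).le⟩
  have hK₂bdd : BddBelow K₂ := ⟨Tα, fun x hx => hx.1.1⟩
  set R₂ := sInf K₂ with hR₂def
  have hR₂mem : R₂ ∈ K₂ := hK₂closed.csInf_mem hK₂ne hK₂bdd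
  have hR₂le : h R₂ ≤ 0 := hR₂mem.2
  have hTR₂ : Tα < R₂ := lt_of_le_of_ne hR₂mem.1.1 (by
    intro e
    rw [← e] at hR₂le
    linarith)
  have hpos₂ : ∀ t : ℝ, Tα ≤ t → t < R₂ → 0 < h t := by
    intro t h1 h2
    by_contra hcon
    push_neg at hcon
    have : t ∈ K₂ := ⟨⟨h1, h2.le.trans hR₂mem.1.2⟩, hcon⟩
    exact absurd (csInf_le hK₂bdd this) (not_le.2 h2)
  have hhR₂ : h R₂ = 0 := by
    refine le_antisymm hR₂le ?_
    have tendR : Tendsto h (𝓝[<] R₂) (𝓝 (h R₂)) :=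
      (hcont R₂ (lt_of_lt_of_le hT0 hR₂mem.1.1)).continuousWithinAt
    refine ge_of_tendsto tendR ?_
    filter_upwards [Ico_mem_nhdsLT hTR₂] with t ht
    exact (hpos₂ t ht.1 ht.2).le
  have hmid : ∀ t : ℝ, R₁ < t → t < R₂ → 0 < h t := by
    intro t h1 h2
    rcases le_or_gt t Tα with hc1 | hc1
    · exact hpos₁ t h1 hc1
    · exact hpos₂ t hc1.le h2
  exact ⟨R₁, Tα, R₂, hR₁pos, hR₁T, hTR₂, hhR₁, hhR₂, hmid, hglobal, hhT⟩
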